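/- In the augmented OT problem with cost C_aug where (C_aug)_{ij} = 0 whenever i = n+1 or j = n+1, dropping the constraint (P_aug)_{n+1,n+1} = 0 does not change the optimal value: min{⟨P_aug, C_aug⟩ : P_aug ∈ Π(a_aug, b_aug)} = min{⟨P_aug, C_aug⟩ : P_aug ∈ Π(a_aug, b_aug), (P_aug)_{n+1,n+1} = 0}. -/

import Mathlib

open Finset

lemma redistribute_aux (n : ℕ)
    (aaug baug : Fin (n + 1) → ℝ)
    (Caug : Matrix (Fin (n + 1)) (Fin (n + 1)) ℝ)
    (hC0 : ∀ i j, 0 ≤ Caug i j)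
    (hCrow : ∀ j, Caug (Fin.last n) j = 0)
    (hCcol : ∀ i, Caug i (Fin.last n) = 0)
    (hfeas : baug (Fin.last n) ≤ ∑ i : Fin n, aaug i.castSucc)
    (P : Matrix (Fin (n + 1)) (Fin (n + 1)) ℝ)
    (hP0 : ∀ i j, 0 ≤ P i j) (hPr : ∀ i, (∑ j, P i j) = aaug i)
    (hPc : ∀ j, (∑ i, P i j) = baug j) :
    ∃ Q : Matrix (Fin (n + 1)) (Fin (n + 1)) ℝ,
      (∀ i j, 0 ≤ Q i j) ∧ (∀ i, (∑ j, Q i j) = aaug i) ∧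
      (∀ j, (∑ i, Q i j) = baug j) ∧ Q (Fin.last n) (Fin.last n) = 0 ∧
      (∑ i, ∑ j, Q i j * Caug i j) ≤ ∑ i, ∑ j, P i j * Caug i j := by
  set ε := P (Fin.last n) (Fin.last n) with hεdef
  by_cases hε : ε = 0
  · exact ⟨P, hP0, hPr, hPc, hε, le_refl _⟩
  have hεpos : 0 < ε := lt_of_le_of_ne (hP0 _ _) (Ne.symm hε)
  set S : ℝ := ∑ i : Fin n, ∑ j : Fin n, P i.castSucc j.castSucc with hSdef
  have hne : ∀ i : Fin n, i.castSucc ≠ Fin.last n := fun i => (Fin.castSucc_lt_last i).ne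
  -- column last sum
  have hcol : (∑ i : Fin n, P i.castSucc (Fin.last n)) = baug (Fin.last n) - ε := by
    have := hPc (Fin.last n)
    rw [Fin.sum_univ_castSucc] at this
    linarith
  -- S value
  have hSval : S = (∑ i : Fin n, aaug i.castSucc) - baug (Fin.last n) + ε := by
    have hrow : ∀ i : Fin n, (∑ j : Fin n, P i.castSucc j.castSucc)
        = aaug i.castSucc - P i.castSucc (Fin.last n) := by
      intro i
      have := hPr i.castSucc
      rw [Fin.sum_univ_castSucc] at this
      linarith
    rw [hSdef]
    rw [Finset.sum_congr rfl (fun i _ => hrow i), Finset.sum_sub_distrib, hcol]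
    ring
  have hSε : ε ≤ S := by rw [hSval]; linarith
  have hSpos : 0 < S := lt_of_lt_of_le hεpos hSε
  have hfrac : 0 ≤ 1 - ε / S := by
    have : ε / S ≤ 1 := (div_le_one hSpos).mpr hSε
    linarith
  set Q : Matrix (Fin (n + 1)) (Fin (n + 1)) ℝ := fun i j =>
    if i = Fin.last n then
      (if j = Fin.last n then 0 else P i j + ε * (∑ k : Fin n, P k.castSucc j) / S)
    else if j = Fin.last n then P i j + ε * (∑ k : Fin n, P i k.castSucc) / S
    else P i j * (1 - ε / S) with hQdef
  have hQint : ∀ (i j : Fin n), Q i.castSucc j.castSucc = P i.castSucc j.castSucc * (1 - ε / S) := by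
    intro i j; simp [hQdef, hne i, hne j]
  have hQrowlast : ∀ j : Fin n, Q (Fin.last n) j.castSucc
      = P (Fin.last n) j.castSucc + ε * (∑ k : Fin n, P k.castSucc j.castSucc) / S := by
    intro j; simp [hQdef, hne j]
  have hQcollast : ∀ i : Fin n, Q i.castSucc (Fin.last n)
      = P i.castSucc (Fin.last n) + ε * (∑ k : Fin n, P i.castSucc k.castSucc) / S := by
    intro i; simp [hQdef, hne i]
  have hQcorner : Q (Fin.last n) (Fin.last n) = 0 := by simp [hQdef]
  refine ⟨Q, ?_, ?_, ?_, hQcorner, ?_⟩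
  · -- nonnegativity
    intro i j
    rcases Fin.eq_castSucc_or_eq_last i with ⟨i0, rfl⟩ | rfl <;>
      rcases Fin.eq_castSucc_or_eq_last j with ⟨j0, rfl⟩ | rfl
    · rw [hQint]; exact mul_nonneg (hP0 _ _) hfrac
    · rw [hQcollast]
      have : 0 ≤ ε * (∑ k : Fin n, P i0.castSucc k.castSucc) / S :=
        div_nonneg (mul_nonneg hεpos.le (Finset.sum_nonneg fun k _ => hP0 _ _)) hSpos.le
      linarith [hP0 i0.castSucc (Fin.last n)]
    · rw [hQrowlast]
      have : 0 ≤ ε * (∑ k : Fin n, P k.castSucc j0.castSucc) / S :=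
        div_nonneg (mul_nonneg hεpos.le (Finset.sum_nonneg fun k _ => hP0 _ _)) hSpos.le
      linarith [hP0 (Fin.last n) j0.castSucc]
    · rw [hQcorner]
  · -- row sums
    intro i
    rcases Fin.eq_castSucc_or_eq_last i with ⟨i0, rfl⟩ | rfl
    · rw [Fin.sum_univ_castSucc]
      have h1 : (∑ j : Fin n, Q i0.castSucc j.castSucc)
          = (∑ j : Fin n, P i0.castSucc j.castSucc) * (1 - ε / S) := by
        rw [Finset.sum_congr rfl fun j _ => hQint i0 j, ← Finset.sum_mul]
      rw [h1, hQcollast]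
      have := hPr i0.castSucc
      rw [Fin.sum_univ_castSucc] at this
      field_simp
      ring_nf
      nlinarith [this]
    · rw [Fin.sum_univ_castSucc, hQcorner]
      have h1 : (∑ j : Fin n, Q (Fin.last n) j.castSucc)
          = (∑ j : Fin n, P (Fin.last n) j.castSucc) + ε * S / S := by
        rw [Finset.sum_congr rfl fun j _ => hQrowlast j, Finset.sum_add_distrib]
        congr 1
        rw [hSdef]
        rw [← Finset.sum_div, ← Finset.mul_sum, Finset.sum_comm]
      rw [h1, mul_div_assoc, div_self hSpos.ne', mul_one]
      have := hPr (Fin.last n)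
      rw [Fin.sum_univ_castSucc] at this
      linarith
  · -- column sums
    intro j
    rcases Fin.eq_castSucc_or_eq_last j with ⟨j0, rfl⟩ | rfl
    · rw [Fin.sum_univ_castSucc]
      have h1 : (∑ i : Fin n, Q i.castSucc j0.castSucc)
          = (∑ i : Fin n, P i.castSucc j0.castSucc) * (1 - ε / S) := by
        rw [Finset.sum_congr rfl fun i _ => hQint i j0, ← Finset.sum_mul]
      rw [h1, hQrowlast]
      have := hPc j0.castSucc
      rw [Fin.sum_univ_castSucc] at this
      field_simp
      ring_nf
      nlinarith [this]
    · rw [Fin.sum_univ_castSucc, hQcorner]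
      have h1 : (∑ i : Fin n, Q i.castSucc (Fin.last n))
          = (∑ i : Fin n, P i.castSucc (Fin.last n)) + ε * S / S := by
        rw [Finset.sum_congr rfl fun i _ => hQcollast i, Finset.sum_add_distrib]
        congr 1
        rw [hSdef, ← Finset.sum_div, ← Finset.mul_sum]
      rw [h1, mul_div_assoc, div_self hSpos.ne', mul_one, hcol]
      ring
  · -- cost comparison
    have costeq : ∀ (R : Matrix (Fin (n+1)) (Fin (n+1)) ℝ),
        (∑ i, ∑ j, R i j * Caug i j)
        = ∑ i : Fin n, ∑ j : Fin n, R i.castSucc j.castSucc * Caug i.castSucc j.castSucc := by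
      intro R
      rw [Fin.sum_univ_castSucc]
      simp only [hCrow, mul_zero, Finset.sum_const_zero, add_zero]
      refine Finset.sum_congr rfl fun i _ => ?_
      rw [Fin.sum_univ_castSucc, hCcol, mul_zero, add_zero]
    rw [costeq P, costeq Q]
    refine Finset.sum_le_sum fun i _ => Finset.sum_le_sum fun j _ => ?_
    rw [hQint]
    have hc := hC0 i.castSucc j.castSucc
    have hp := hP0 i.castSucc j.castSucc
    have hdiv : 0 ≤ ε / S := div_nonneg hεpos.le hSpos.le
    nlinarith [mul_nonneg (mul_nonneg hp hdiv) hc]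

theorem drop_corner_constraint_min_eq
    (n : ℕ) (hn : 1 ≤ n)
    (aaug baug : Fin (n + 1) → ℝ)
    (Caug : Matrix (Fin (n + 1)) (Fin (n + 1)) ℝ)
    (haaug : ∀ i, 0 ≤ aaug i) (hbaug : ∀ j, 0 ≤ baug j)
    (hmass : ∑ i, aaug i = ∑ j, baug j)
    (hC0 : ∀ i j, 0 ≤ Caug i j)
    (hCrow : ∀ j, Caug (Fin.last n) j = 0)
    (hCcol : ∀ i, Caug i (Fin.last n) = 0)
    (hfeas : baug (Fin.last n) ≤ ∑ i : Fin n, aaug i.castSucc)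
    (hne : {P : Matrix (Fin (n + 1)) (Fin (n + 1)) ℝ |
        (∀ i j, 0 ≤ P i j) ∧ (∀ i, (∑ j, P i j) = aaug i) ∧
        (∀ j, (∑ i, P i j) = baug j) ∧
        P (Fin.last n) (Fin.last n) = 0}.Nonempty) :
    sInf ((fun P : Matrix (Fin (n + 1)) (Fin (n + 1)) ℝ =>
          ∑ i, ∑ j, P i j * Caug i j) ''
        {P | (∀ i j, 0 ≤ P i j) ∧ (∀ i, (∑ j, P i j) = aaug i) ∧
             (∀ j, (∑ i, P i j) = baug j)})
      = sInf ((fun P : Matrix (Fin (n + 1)) (Fin (n + 1)) ℝ =>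
          ∑ i, ∑ j, P i j * Caug i j) ''
        {P | (∀ i j, 0 ≤ P i j) ∧ (∀ i, (∑ j, P i j) = aaug i) ∧
             (∀ j, (∑ i, P i j) = baug j) ∧
             P (Fin.last n) (Fin.last n) = 0}) := by
  set f : Matrix (Fin (n + 1)) (Fin (n + 1)) ℝ → ℝ :=
    fun P => ∑ i, ∑ j, P i j * Caug i j with hf
  set Sbig := {P : Matrix (Fin (n + 1)) (Fin (n + 1)) ℝ |
      (∀ i j, 0 ≤ P i j) ∧ (∀ i, (∑ j, P i j) = aaug i) ∧
      (∀ j, (∑ i, P i j) = baug j)} with hSbig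
  set Ssmall := {P : Matrix (Fin (n + 1)) (Fin (n + 1)) ℝ |
      (∀ i j, 0 ≤ P i j) ∧ (∀ i, (∑ j, P i j) = aaug i) ∧
      (∀ j, (∑ i, P i j) = baug j) ∧ P (Fin.last n) (Fin.last n) = 0} with hSsmall
  have hsub : Ssmall ⊆ Sbig := fun P hP => ⟨hP.1, hP.2.1, hP.2.2.1⟩
  have hBne : (f '' Ssmall).Nonempty := hne.image f
  have hAne : (f '' Sbig).Nonempty := hBne.mono (Set.image_mono (f := f) hsub)
  have hAbdd : BddBelow (f '' Sbig) := by
    refine ⟨0, fun x hx => ?_⟩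
    obtain ⟨P, hP, rfl⟩ := hx
    exact Finset.sum_nonneg fun i _ => Finset.sum_nonneg fun j _ =>
      mul_nonneg (hP.1 i j) (hC0 i j)
  have hBbdd : BddBelow (f '' Ssmall) := hAbdd.mono (Set.image_mono (f := f) hsub)
  refine le_antisymm (csInf_le_csInf hAbdd hBne (Set.image_mono (f := f) hsub)) ?_
  refine le_csInf hAne ?_
  rintro x ⟨P, hP, rfl⟩
  obtain ⟨Q, hQ0, hQr, hQc, hQcorner, hQle⟩ :=
    redistribute_aux n aaug baug Caug hC0 hCrow hCcol hfeas P hP.1 hP.2.1 hP.2.2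
  exact le_trans (csInf_le hBbdd ⟨Q, ⟨hQ0, hQr, hQc, hQcorner⟩, rfl⟩) hQle
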